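/- arXiv:2003.06649 — 5 statements merged into one kernel-verified Lean document; each statement's English description precedes it below -/
import Mathlib

section
/- For n even, the number of distinct solution sets of constraint networks on n variables over a domain D with |D| ≥ 3 using a single relation R ∈ {>, ≠} is at least 2^{(n/2)²}. -/
/-- For `n = 2m` variables and a domain `D` containing three values
`d₁ > d₂ > d₃`, using a single relation `R ∈ {>, ≠}`, the number of distinct
solution sets of constraint networks over `R` is at least `2^{(n/2)²} = 2^{m²}`. -/
theorem card_solution_sets_ge_two_pow_sq
    (m : ℕ) (D : Finset ℤ) (d1 d2 d3 : ℤ)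
    (hd1 : d1 ∈ D) (hd2 : d2 ∈ D) (hd3 : d3 ∈ D)
    (h12 : d1 > d2) (h23 : d2 > d3)
    (R : ℤ → ℤ → Prop) (hR : R = (· > ·) ∨ R = (· ≠ ·)) :
    2 ^ (m * m) ≤
      Set.ncard {T : Set (Fin (2 * m) → ℤ) |
        ∃ C : Finset (Fin (2 * m) × Fin (2 * m)),
          T = {φ | (∀ i, φ i ∈ D) ∧ ∀ p ∈ C, R (φ p.1) (φ p.2)}} := by
  classical
  have hRgt : ∀ x y : ℤ, x > y → R x y := by
    rintro x y h; rcases hR with rfl | rfl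
    · exact h
    · exact ne_of_gt h
  have hRrefl : ¬ R d2 d2 := by
    rcases hR with rfl | rfl
    · exact lt_irrefl d2
    · simp
  set e1 : Fin m → Fin (2 * m) := fun i => ⟨i.1, by omega⟩ with he1
  set e2 : Fin m → Fin (2 * m) := fun j => ⟨m + j.1, by omega⟩ with he2
  set Φ : Fin m → Fin m → (Fin (2 * m) → ℤ) := fun i j q =>
    if (q : ℕ) < m then (if (q : ℕ) = i.1 then d2 else d1)
    else (if (q : ℕ) = m + j.1 then d2 else d3) with hΦ
  set Cof : Finset (Fin m × Fin m) → Finset (Fin (2 * m) × Fin (2 * m)) :=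
    fun S => (Finset.univ.filter (fun p => p ∉ S)).image (fun p => (e1 p.1, e2 p.2)) with hCof
  set F : Finset (Fin m × Fin m) → Set (Fin (2 * m) → ℤ) :=
    fun S => {ψ | (∀ i, ψ i ∈ D) ∧ ∀ p ∈ Cof S, R (ψ p.1) (ψ p.2)} with hF
  have hv1 : ∀ i j a : Fin m, Φ i j (e1 a) = if a.1 = i.1 then d2 else d1 := by
    intro i j a
    simp only [hΦ, he1]
    rw [if_pos a.2]
  have hv2 : ∀ i j b : Fin m, Φ i j (e2 b) = if b.1 = j.1 then d2 else d3 := by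
    intro i j b
    simp only [hΦ, he2]
    rw [if_neg (by omega)]
    congr 1
    simp [Nat.add_right_cancel_iff]
  have key : ∀ S i j, Φ i j ∈ F S ↔ (i, j) ∈ S := by
    intro S i j
    constructor
    · rintro ⟨-, h2⟩
      by_contra hmem
      have hc : (e1 i, e2 j) ∈ Cof S := by
        simp only [hCof, Finset.mem_image, Finset.mem_filter, Finset.mem_univ, true_and]
        exact ⟨(i, j), hmem, rfl⟩
      have := h2 _ hc
      rw [hv1, hv2, if_pos rfl, if_pos rfl] at this
      exact hRrefl this
    · intro hmem
      refine ⟨?_, ?_⟩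
      · intro q
        simp only [hΦ]
        split <;> split <;> assumption
      · intro p hp
        simp only [hCof, Finset.mem_image, Finset.mem_filter, Finset.mem_univ, true_and] at hp
        obtain ⟨⟨a, b⟩, hab, rfl⟩ := hp
        simp only
        rw [hv1, hv2]
        by_cases hai : a.1 = i.1 <;> by_cases hbj : b.1 = j.1 <;>
          simp only [hai, hbj, if_pos, if_neg, ite_true, ite_false, if_true, if_false]
        · have heq : (a, b) = (i, j) := by
            simp [Prod.ext_iff, Fin.ext_iff, hai, hbj]
          exact absurd hmem (heq ▸ hab)
        · exact hRgt _ _ h23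
        · exact hRgt _ _ h12
        · exact hRgt _ _ (h12.trans' h23)
  have Finj : Function.Injective F := by
    intro S S' h
    ext ⟨i, j⟩
    rw [← key S i j, h, key]
  have hsub : Set.range F ⊆ {T : Set (Fin (2 * m) → ℤ) |
      ∃ C : Finset (Fin (2 * m) × Fin (2 * m)),
        T = {φ | (∀ i, φ i ∈ D) ∧ ∀ p ∈ C, R (φ p.1) (φ p.2)}} := by
    rintro _ ⟨S, rfl⟩
    exact ⟨Cof S, rfl⟩
  have hfin : ({T : Set (Fin (2 * m) → ℤ) |
      ∃ C : Finset (Fin (2 * m) × Fin (2 * m)),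
        T = {φ | (∀ i, φ i ∈ D) ∧ ∀ p ∈ C, R (φ p.1) (φ p.2)}}).Finite := by
    have : {T : Set (Fin (2 * m) → ℤ) |
        ∃ C : Finset (Fin (2 * m) × Fin (2 * m)),
          T = {φ | (∀ i, φ i ∈ D) ∧ ∀ p ∈ C, R (φ p.1) (φ p.2)}} ⊆
        Set.range (fun C : Finset (Fin (2 * m) × Fin (2 * m)) =>
          {φ : Fin (2 * m) → ℤ | (∀ i, φ i ∈ D) ∧ ∀ p ∈ C, R (φ p.1) (φ p.2)}) := by
      rintro T ⟨C, rfl⟩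
      exact ⟨C, rfl⟩
    exact (Set.finite_range _).subset this
  have hcard : (Set.range F).ncard = 2 ^ (m * m) := by
    rw [← Set.image_univ, Set.ncard_image_of_injective _ Finj, Set.ncard_univ,
      Nat.card_eq_fintype_card, Fintype.card_finset, Fintype.card_prod, Fintype.card_fin]
  calc 2 ^ (m * m) = (Set.range F).ncard := hcard.symm
    _ ≤ _ := Set.ncard_le_ncard hsub hfin
end

section
/- Let L be a satisfiable Boolean constraint network over {=, ≠, >} on variables X, and let B' be a set of binary constraints over {=, ≠, >} none of which is entailed by L. Then there exists an assignment satisfying L that violates at least half of the constraints in B'. -/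
/-- Kinds of binary constraints over the language `{=, ≠, >}`. -/
inductive CKind : Type
  | ceq : CKind
  | cne : CKind
  | cgt : CKind

/-- Satisfaction of a binary constraint over the Boolean domain `{0,1}`
(`true` plays the role of `1`). -/
def holdsC {X : Type} (e : X → Bool) : CKind × X × X → Prop
  | (CKind.ceq, i, j) => e i = e j
  | (CKind.cne, i, j) => e i ≠ e j
  | (CKind.cgt, i, j) => e i = true ∧ e j = false

open scoped Classical

namespace ESVH

variable {X : Type}

def Edge (L : Finset (CKind × X × X)) (a b : X) : Prop :=
  ∃ k, (k, a, b) ∈ L ∨ (k, b, a) ∈ L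

def Rel (L : Finset (CKind × X × X)) : X → X → Prop := Relation.EqvGen (Edge L)

lemma rel_refl (L : Finset (CKind × X × X)) (x : X) : Rel L x x := Relation.EqvGen.refl x

lemma rel_symm {L : Finset (CKind × X × X)} {x y : X} (h : Rel L x y) : Rel L y x :=
  Relation.EqvGen.symm _ _ h

lemma rel_trans {L : Finset (CKind × X × X)} {x y z : X} (h : Rel L x y) (h' : Rel L y z) :
    Rel L x z := Relation.EqvGen.trans _ _ _ h h'

def SolL (L : Finset (CKind × X × X)) (e : X → Bool) : Prop := ∀ c ∈ L, holdsC e c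

def FreeOf (L : Finset (CKind × X × X)) (x : X) : Prop :=
  ∀ i j, (CKind.cgt, i, j) ∈ L → ¬ Rel L i x

lemma freeOf_rel {L : Finset (CKind × X × X)} {x y : X} (h : Rel L x y) :
    FreeOf L x ↔ FreeOf L y := by
  constructor
  · intro hf i j hm hr; exact hf i j hm (rel_trans hr (rel_symm h))
  · intro hf i j hm hr; exact hf i j hm (rel_trans hr h)

noncomputable def rep (L : Finset (CKind × X × X)) (x : X) : X :=
  @Classical.epsilon _ ⟨x⟩ (Rel L x)

lemma rel_rep (L : Finset (CKind × X × X)) (x : X) : Rel L x (rep L x) := by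
  haveI : Nonempty X := ⟨x⟩
  exact Classical.epsilon_spec ⟨x, rel_refl L x⟩

lemma rep_eq {L : Finset (CKind × X × X)} {x y : X} (h : Rel L x y) :
    rep L x = rep L y := by
  unfold rep
  congr 1
  funext z
  exact propext ⟨fun h' => rel_trans (rel_symm h) h', fun h' => rel_trans h h'⟩

lemma rel_of_rep_eq {L : Finset (CKind × X × X)} {x y : X} (h : rep L x = rep L y) :
    Rel L x y :=
  rel_trans (rel_rep L x) (h ▸ rel_symm (rel_rep L y))

lemma rel_iff {L : Finset (CKind × X × X)} {e₀ e : X → Bool}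
    (h0 : SolL L e₀) (he : SolL L e) {x y : X} (h : Rel L x y) :
    (e x = e₀ x ↔ e y = e₀ y) := by
  induction h with
  | rel a b hab =>
      obtain ⟨k, h | h⟩ := hab
      · have h1 := h0 _ h; have h2 := he _ h
        cases k <;> simp only [holdsC] at h1 h2 <;>
          (cases hea : e a <;> cases heb : e b <;> cases h0a : e₀ a <;> cases h0b : e₀ b <;>
            simp_all)
      · have h1 := h0 _ h; have h2 := he _ h
        cases k <;> simp only [holdsC] at h1 h2 <;>
          (cases hea : e a <;> cases heb : e b <;> cases h0a : e₀ a <;> cases h0b : e₀ b <;>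
            simp_all)
  | refl => exact Iff.rfl
  | symm _ _ _ ih => exact ih.symm
  | trans _ _ _ _ _ ih1 ih2 => exact ih1.trans ih2

lemma pinned {L : Finset (CKind × X × X)} {e₀ e : X → Bool}
    (h0 : SolL L e₀) (he : SolL L e) {x : X} (hx : ¬ FreeOf L x) : e x = e₀ x := by
  simp only [FreeOf, not_forall, not_not] at hx
  obtain ⟨i, j, hm, hrel⟩ := hx
  have h1 := h0 _ hm
  have h2 := he _ hm
  simp only [holdsC] at h1 h2
  have hi : e i = e₀ i := by rw [h1.1, h2.1]
  exact (rel_iff h0 he hrel).mp hi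

lemma sol_flip {L : Finset (CKind × X × X)} {e₀ : X → Bool} (h0 : SolL L e₀)
    (U : X → Prop) (hU : ∀ x y, Rel L x y → (U x ↔ U y)) (hUf : ∀ x, U x → FreeOf L x) :
    SolL L (fun x => if U x then !(e₀ x) else e₀ x) := by
  rintro ⟨k, i, j⟩ hc
  have hrel : Rel L i j := Relation.EqvGen.rel _ _ ⟨k, Or.inl hc⟩
  have hiff := hU i j hrel
  have h1 := h0 _ hc
  by_cases hi : U i
  · have hj : U j := hiff.mp hi
    have hk : k ≠ CKind.cgt := by
      rintro rfl; exact (hUf i hi) i j hc (rel_refl L i)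
    cases k with
    | ceq => simp only [holdsC] at h1 ⊢; simp [hi, hj, h1]
    | cne =>
        simp only [holdsC] at h1 ⊢; simp only [if_pos hi, if_pos hj]
        cases h0i : e₀ i <;> cases h0j : e₀ j <;> simp_all
    | cgt => exact absurd rfl hk
  · have hj : ¬ U j := fun h => hi (hiff.mpr h)
    cases k <;> simp only [holdsC] at h1 ⊢ <;> simp [hi, hj, h1]


variable (L : Finset (CKind × X × X)) (e₀ : X → Bool) (S : Finset X)

def Uset (ω : {x // x ∈ S} → Bool) (x : X) : Prop :=
  FreeOf L x ∧ ∃ h : rep L x ∈ S, ω ⟨rep L x, h⟩ = true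

noncomputable def Emap (ω : {x // x ∈ S} → Bool) (x : X) : Bool :=
  if Uset L S ω x then !(e₀ x) else e₀ x

noncomputable def flipAt (s : {x // x ∈ S}) (ω : {x // x ∈ S} → Bool) : {x // x ∈ S} → Bool :=
  fun t => if t = s then !(ω t) else ω t

lemma flipAt_invol (s : {x // x ∈ S}) (ω : {x // x ∈ S} → Bool) :
    flipAt S s (flipAt S s ω) = ω := by
  funext t
  unfold flipAt
  by_cases h : t = s <;> simp [h]

lemma flipAt_inj (s : {x // x ∈ S}) : Function.Injective (flipAt S s) := by
  intro ω1 ω2 h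
  have := congrArg (flipAt S s) h
  rwa [flipAt_invol, flipAt_invol] at this

lemma Uset_rel (ω : {x // x ∈ S} → Bool) {x y : X} (h : Rel L x y) :
    Uset L S ω x ↔ Uset L S ω y := by
  have hrep : rep L x = rep L y := rep_eq h
  unfold Uset
  rw [freeOf_rel h]
  constructor
  · rintro ⟨hf, hm, ht⟩
    exact ⟨hf, hrep ▸ hm, by rw [← ht]; congr 1; exact Subtype.ext hrep.symm⟩
  · rintro ⟨hf, hm, ht⟩
    exact ⟨hf, hrep ▸ hm, by rw [← ht]; congr 1; exact Subtype.ext hrep⟩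

lemma Emap_sol (h0 : SolL L e₀) (ω : {x // x ∈ S} → Bool) : SolL L (Emap L e₀ S ω) :=
  fun c hc =>
    sol_flip h0 (Uset L S ω) (fun x y h => Uset_rel L S ω h) (fun _ hx => hx.1) c hc

lemma Emap_pin (ω : {x // x ∈ S} → Bool) {x : X} (hx : ¬ FreeOf L x) :
    Emap L e₀ S ω x = e₀ x := by
  unfold Emap
  exact if_neg (fun h => hx h.1)

lemma Emap_flip_self (s : {x // x ∈ S}) (ω : {x // x ∈ S} → Bool) {x : X}
    (hf : FreeOf L x) (hx : rep L x = s.1) :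
    Emap L e₀ S (flipAt S s ω) x = !(Emap L e₀ S ω x) := by
  obtain ⟨sv, hsv⟩ := s
  simp only at hx
  have hmem : rep L x ∈ S := hx ▸ hsv
  have hidx : ∀ h : rep L x ∈ S, (⟨rep L x, h⟩ : {y // y ∈ S}) = ⟨sv, hsv⟩ :=
    fun h => Subtype.ext hx
  have h1 : Uset L S ω x ↔ ω ⟨sv, hsv⟩ = true := by
    unfold Uset
    constructor
    · rintro ⟨-, h, ht⟩; rwa [hidx h] at ht
    · intro ht; exact ⟨hf, hmem, by rw [hidx hmem]; exact ht⟩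
  have h2 : Uset L S (flipAt S ⟨sv, hsv⟩ ω) x ↔ ω ⟨sv, hsv⟩ = false := by
    unfold Uset flipAt
    constructor
    · rintro ⟨-, h, ht⟩
      rw [hidx h, if_pos rfl] at ht
      simpa using ht
    · intro ht
      refine ⟨hf, hmem, ?_⟩
      rw [hidx hmem, if_pos rfl, ht]
      rfl
  unfold Emap
  by_cases hb : ω ⟨sv, hsv⟩ = true
  · rw [if_neg (fun hh => by rw [h2] at hh; rw [hh] at hb; exact Bool.false_ne_true hb),
      if_pos (h1.mpr hb)]
    simp
  · have hb' : ω ⟨sv, hsv⟩ = false := by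
      cases hbb : ω ⟨sv, hsv⟩
      · rfl
      · exact absurd hbb hb
    rw [if_pos (h2.mpr hb'), if_neg (fun hh => hb (h1.mp hh))]

lemma Emap_flip_other (s : {x // x ∈ S}) (ω : {x // x ∈ S} → Bool) {x : X}
    (hx : rep L x ≠ s.1) :
    Emap L e₀ S (flipAt S s ω) x = Emap L e₀ S ω x := by
  have hidx : ∀ h : rep L x ∈ S, (⟨rep L x, h⟩ : {y // y ∈ S}) ≠ s :=
    fun h hh => hx (by rw [← hh])
  have hiff : Uset L S (flipAt S s ω) x ↔ Uset L S ω x := by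
    unfold Uset flipAt
    constructor
    · rintro ⟨hf, h, ht⟩
      rw [if_neg (hidx h)] at ht
      exact ⟨hf, h, ht⟩
    · rintro ⟨hf, h, ht⟩
      exact ⟨hf, h, by rw [if_neg (hidx h)]; exact ht⟩
  unfold Emap
  by_cases h : Uset L S ω x
  · rw [if_pos (hiff.mpr h), if_pos h]
  · rw [if_neg (fun hh => h (hiff.mp hh)), if_neg h]

lemma bool_ceq : ∀ a b c d u v : Bool,
    (a = c ↔ b = d) → (u = c ↔ v = d) → a = b → ¬ u = v → False := by decide

lemma bool_cne : ∀ a b c d u v : Bool,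
    (a = c ↔ b = d) → (u = c ↔ v = d) → ¬ a = b → u = v → False := by decide

lemma bool_not_self : ∀ a : Bool, (!a) = a → False := by decide

lemma bool_ne_ne : ∀ a b : Bool, a ≠ b → (!a) ≠ b → False := by decide

lemma bool_eq_not : ∀ a b : Bool, a = b → a = (!b) → False := by decide

lemma bool_ne_not : ∀ a b : Bool, a ≠ b → a ≠ (!b) → False := by decide

end ESVH

/-- If `L` is a satisfiable Boolean constraint network over
`{=, ≠, >}` and `B'` is a set of binary constraints over `{=, ≠, >}` none of
which is entailed by `L`, then some assignment satisfying `L` violates at least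
half of the constraints in `B'`. -/
theorem exists_solution_violating_half
    (X : Type) (L B' : Finset (CKind × X × X))
    (hsat : ∃ e : X → Bool, ∀ c ∈ L, holdsC e c)
    (hB : ∀ c ∈ B', ¬ (∀ e : X → Bool, (∀ c' ∈ L, holdsC e c') → holdsC e c)) :
    ∃ e : X → Bool, (∀ c ∈ L, holdsC e c) ∧
      (B'.card : ℝ) / 2 ≤ ((B'.filter (fun c => ¬ holdsC e c)).card : ℝ) := by
  classical
  open ESVH in
  obtain ⟨e₀, h0⟩ := hsat
  rcases eq_or_ne B' ∅ with rfl | hB0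
  · exact ⟨e₀, h0, by simp⟩
  set V : Finset X := B'.biUnion (fun c => {c.2.1, c.2.2}) with hV
  set S : Finset X := (V.filter (fun x => FreeOf L x)).image (rep L) with hS
  have hmemS : ∀ {x : X}, x ∈ V → FreeOf L x → rep L x ∈ S := by
    intro x hx hf
    rw [hS]
    exact Finset.mem_image_of_mem _ (Finset.mem_filter.mpr ⟨hx, hf⟩)
  set E : ({x // x ∈ S} → Bool) → X → Bool := Emap L e₀ S with hE
  have hEsol : ∀ ω, SolL L (E ω) := fun ω => Emap_sol L e₀ S h0 ω
  -- per-constraint inequality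
  have key : ∀ c ∈ B', Fintype.card ({x // x ∈ S} → Bool) ≤
      2 * (Finset.univ.filter (fun ω : {x // x ∈ S} → Bool => ¬ holdsC (E ω) c)).card := by
    rintro ⟨k, i, j⟩ hc
    have hiV : i ∈ V := by
      rw [hV]
      exact Finset.mem_biUnion.mpr ⟨_, hc, by simp⟩
    have hjV : j ∈ V := by
      rw [hV]
      exact Finset.mem_biUnion.mpr ⟨_, hc, by simp⟩
    obtain ⟨estar, hstar, hviol⟩ : ∃ e : X → Bool, (∀ c' ∈ L, holdsC e c') ∧
        ¬ holdsC e (k, i, j) := by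
      have h := hB _ hc; push_neg at h; exact h
    have main : ∀ (ι : ({x // x ∈ S} → Bool) → ({x // x ∈ S} → Bool)),
        Function.Injective ι →
        (∀ ω, holdsC (E ω) (k, i, j) → ¬ holdsC (E (ι ω)) (k, i, j)) →
        Fintype.card ({x // x ∈ S} → Bool) ≤
          2 * (Finset.univ.filter
            (fun ω : {x // x ∈ S} → Bool => ¬ holdsC (E ω) (k, i, j))).card := by
      intro ι hinj hmap
      have h1 : (Finset.univ.filter
            (fun ω : {x // x ∈ S} → Bool => holdsC (E ω) (k, i, j))).card ≤
          (Finset.univ.filter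
            (fun ω : {x // x ∈ S} → Bool => ¬ holdsC (E ω) (k, i, j))).card := by
        apply Finset.card_le_card_of_injOn ι
        · intro ω hω
          simp only [Finset.mem_coe, Finset.mem_filter, Finset.mem_univ, true_and] at hω ⊢
          exact hmap ω hω
        · exact hinj.injOn
      have h2 := Finset.card_filter_add_card_filter_not
        (s := (Finset.univ : Finset ({x // x ∈ S} → Bool)))
        (p := fun ω => holdsC (E ω) (k, i, j))
      rw [Finset.card_univ] at h2
      omega
    by_cases hfi : FreeOf L i
    · refine main (flipAt S ⟨rep L i, hmemS hiV hfi⟩) (flipAt_inj S _) ?_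
      intro ω hω hω'
      have hii : E (flipAt S ⟨rep L i, hmemS hiV hfi⟩ ω) i = !(E ω i) :=
        Emap_flip_self L e₀ S _ ω hfi rfl
      cases k with
      | cgt =>
          obtain ⟨ha, -⟩ := hω
          obtain ⟨ha', -⟩ := hω'
          rw [hii, ha] at ha'
          exact Bool.false_ne_true ha'
      | ceq =>
          by_cases hrel : Rel L i j
          · have hx := rel_iff h0 (hEsol ω) hrel
            have hy := rel_iff h0 hstar hrel
            exact bool_ceq (E ω i) (E ω j) (e₀ i) (e₀ j) (estar i) (estar j) hx hy hω hviol
          · have hjj : E (flipAt S ⟨rep L i, hmemS hiV hfi⟩ ω) j = E ω j :=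
              Emap_flip_other L e₀ S _ ω
                (fun h => hrel (rel_symm (rel_of_rep_eq h)))
            simp only [holdsC] at hω hω'
            rw [hii, hjj, hω] at hω'
            exact bool_not_self _ hω'
      | cne =>
          by_cases hrel : Rel L i j
          · have hx := rel_iff h0 (hEsol ω) hrel
            have hy := rel_iff h0 hstar hrel
            have hv : estar i = estar j := by
              by_contra hne
              exact hviol hne
            exact bool_cne (E ω i) (E ω j) (e₀ i) (e₀ j) (estar i) (estar j) hx hy hω hv
          · have hjj : E (flipAt S ⟨rep L i, hmemS hiV hfi⟩ ω) j = E ω j :=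
              Emap_flip_other L e₀ S _ ω
                (fun h => hrel (rel_symm (rel_of_rep_eq h)))
            simp only [holdsC] at hω hω'
            rw [hii, hjj] at hω'
            exact bool_ne_ne _ _ hω hω'
    · by_cases hfj : FreeOf L j
      · refine main (flipAt S ⟨rep L j, hmemS hjV hfj⟩) (flipAt_inj S _) ?_
        intro ω hω hω'
        have hjj : E (flipAt S ⟨rep L j, hmemS hjV hfj⟩ ω) j = !(E ω j) :=
          Emap_flip_self L e₀ S _ ω hfj rfl
        have hii : E (flipAt S ⟨rep L j, hmemS hjV hfj⟩ ω) i = e₀ i := Emap_pin L e₀ S _ hfi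
        have hii' : E ω i = e₀ i := Emap_pin L e₀ S ω hfi
        cases k with
        | cgt =>
            obtain ⟨-, hb⟩ := hω
            obtain ⟨-, hb'⟩ := hω'
            rw [hjj, hb] at hb'
            exact absurd hb' (by decide)
        | ceq =>
            simp only [holdsC] at hω hω'
            rw [hii, hjj, ← hii'] at hω'
            exact bool_eq_not _ _ hω hω'
        | cne =>
            simp only [holdsC] at hω hω'
            rw [hii, hjj, ← hii'] at hω'
            exact bool_ne_not _ _ hω hω'
      · refine main id Function.injective_id ?_
        intro ω hω _
        have hi1 : E ω i = e₀ i := Emap_pin L e₀ S ω hfi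
        have hj1 : E ω j = e₀ j := Emap_pin L e₀ S ω hfj
        have hi2 : estar i = e₀ i := pinned h0 hstar hfi
        have hj2 : estar j = e₀ j := pinned h0 hstar hfj
        cases k <;> simp only [holdsC] at hω hviol <;>
          rw [hi1, hj1, ← hi2, ← hj2] at hω <;> exact hviol hω
  -- counting
  have hsum : ∑ ω : {x // x ∈ S} → Bool, (B'.filter (fun c => ¬ holdsC (E ω) c)).card
      = ∑ c ∈ B', (Finset.univ.filter
          (fun ω : {x // x ∈ S} → Bool => ¬ holdsC (E ω) c)).card := by
    simp only [Finset.card_filter]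
    rw [Finset.sum_comm]
  have hlow : B'.card * Fintype.card ({x // x ∈ S} → Bool) ≤
      2 * ∑ ω : {x // x ∈ S} → Bool, (B'.filter (fun c => ¬ holdsC (E ω) c)).card := by
    rw [hsum, Finset.mul_sum]
    calc B'.card * Fintype.card ({x // x ∈ S} → Bool)
        = ∑ _c ∈ B', Fintype.card ({x // x ∈ S} → Bool) := by
          rw [Finset.sum_const, smul_eq_mul]
      _ ≤ _ := Finset.sum_le_sum key
  have hΩpos : 0 < Fintype.card ({x // x ∈ S} → Bool) := Fintype.card_pos
  have hexists : ∃ ω : {x // x ∈ S} → Bool,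
      B'.card ≤ 2 * (B'.filter (fun c => ¬ holdsC (E ω) c)).card := by
    by_contra hcon
    push_neg at hcon
    have h4 : ∑ ω : {x // x ∈ S} → Bool,
        (2 * (B'.filter (fun c => ¬ holdsC (E ω) c)).card + 1)
        ≤ ∑ _ω : {x // x ∈ S} → Bool, B'.card :=
      Finset.sum_le_sum (fun ω _ => hcon ω)
    rw [Finset.sum_add_distrib, ← Finset.mul_sum, Finset.sum_const, Finset.sum_const,
      Finset.card_univ, smul_eq_mul, smul_eq_mul, mul_one] at h4
    nlinarith [hlow, hΩpos]
  obtain ⟨ω, hω⟩ := hexists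
  refine ⟨E ω, hEsol ω, ?_⟩
  rw [div_le_iff₀ (by norm_num : (0:ℝ) < 2)]
  have : (B'.card : ℝ) ≤ 2 * ((B'.filter (fun c => ¬ holdsC (E ω) c)).card : ℝ) := by
    exact_mod_cast hω
  linarith
end

section
/- Over the Boolean domain {0,1}, the specialized algorithm structure for learning networks over {>} uses at most 2n + k + 1 queries, where n is the number of variables and k ≤ n: each variable is processed with at most 2 queries in each of two phases over disjoint variable subsets, plus one final verification query; hence networks over {>} on Boolean domains are learnable with O(n) partial queries. -/
/-- The answer of the user for target network `T` over `{>}` on Boolean domain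
to a partial query `q` (a partial assignment): `true` (yes) iff the assignment
violates no constraint of `T`, where `X_i > X_j` means `X_i = 1 ∧ X_j = 0`. -/
def answerQ (n : ℕ) (T : Finset (Fin n × Fin n)) (q : Fin n → Option Bool) : Bool :=
  decide (∀ p ∈ T, ∀ a ∈ q p.1, ∀ b ∈ q p.2, a = true ∧ b = false)

/-- The history of answers after `k` queries when the deterministic algorithm
`A` (mapping an answer history to the next partial query) interacts with the
user for target network `T`. -/
def runHist (n : ℕ) (A : List Bool → (Fin n → Option Bool))
    (T : Finset (Fin n × Fin n)) : ℕ → List Bool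
  | 0 => []
  | k + 1 => runHist n A T k ++ [answerQ n T (A (runHist n A T k))]

namespace GtLearn

variable {n : ℕ} (T : Finset (Fin n × Fin n))

/-- `m` is (the value of) a left variable. -/
def Ln (m : ℕ) : Prop := ∃ p ∈ T, p.1.val = m
/-- `m` is a right variable. -/
def Rn (m : ℕ) : Prop := ∃ p ∈ T, p.2.val = m
/-- left with a smaller witness. -/
def PLn (m : ℕ) : Prop := ∃ p ∈ T, p.1.val = m ∧ p.2.val < m

instance (m : ℕ) : Decidable (Ln T m) := by unfold Ln; infer_instance
instance (m : ℕ) : Decidable (Rn T m) := by unfold Rn; infer_instance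
instance (m : ℕ) : Decidable (PLn T m) := by unfold PLn; infer_instance

/-- detected right in phase one. -/
def PRn (m : ℕ) : Prop := ∃ p ∈ T, p.2.val = m ∧ p.1.val < m ∧ ¬ PLn T p.1.val

instance (m : ℕ) : Decidable (PRn T m) := by unfold PRn; infer_instance

/-- right with a witness assigned in phase two. -/
def En (m : ℕ) : Prop := ∃ p ∈ T, p.2.val = m ∧ (PLn T p.1.val ∨ m < p.1.val)
/-- second reason for a `no` on the first phase-one query. -/
def D2n (m : ℕ) : Prop := ∃ p ∈ T, p.1.val = m ∧ p.2.val < m ∧ ¬ PRn T p.2.val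
/-- detected right in phase two. -/
def Q2Rn (m : ℕ) : Prop := ¬ PLn T m ∧ ¬ PRn T m ∧ En T m

instance (m : ℕ) : Decidable (En T m) := by unfold En; infer_instance
instance (m : ℕ) : Decidable (D2n T m) := by unfold D2n; infer_instance
instance (m : ℕ) : Decidable (Q2Rn T m) := by unfold Q2Rn; infer_instance

/-- phase-one query on variable `m` with value `v`. -/
def sqA (m : ℕ) (v : Bool) : Fin n → Option Bool := fun j =>
  if j.val = m then some v
  else if j.val < m then
    (if PLn T j.val then none else if PRn T j.val then some false else some true)
  else none

/-- phase-two query on variable `m` with value `v`. -/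
def sqB (m : ℕ) (v : Bool) : Fin n → Option Bool := fun j =>
  if j.val = m then some v
  else if PLn T j.val then some true
  else if PRn T j.val then some false
  else if m < j.val then (if Q2Rn T j.val then some false else some true)
  else none

/-- predicted answers -/
def pAns (s : ℕ) : Bool :=
  if s < 2*n then
    (if s % 2 = 1 then !decide (PLn T (s/2)) else !decide (PRn T (s/2) ∨ D2n T (s/2)))
  else if s < 4*n then
    (if PLn T (n - 1 - (s - 2*n)/2) ∨ PRn T (n - 1 - (s - 2*n)/2) then true
     else if (s - 2*n) % 2 = 1 then !decide (Ln T (n - 1 - (s - 2*n)/2))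
     else !decide (En T (n - 1 - (s - 2*n)/2)))
  else true

end GtLearn

namespace GtLearn

def hbit (h : List Bool) (s : ℕ) : Bool := h.getD s true
def aPL (h : List Bool) (m : ℕ) : Bool := !hbit h (2*m+1)
def aPR (h : List Bool) (m : ℕ) : Bool := !hbit h (2*m) && hbit h (2*m+1)
def p2base (n m : ℕ) : ℕ := 2*n + 2*(n - 1 - m)
def aR2 (n : ℕ) (h : List Bool) (m : ℕ) : Bool := !hbit h (p2base n m) && hbit h (p2base n m + 1)

def algA (n : ℕ) (h : List Bool) : Fin n → Option Bool :=
  if h.length < 2*n then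
    fun j => if j.val = h.length/2 then some (decide (h.length % 2 = 0))
      else if j.val < h.length/2 then
        (if aPL h j.val then none else if aPR h j.val then some false else some true)
      else none
  else if h.length < 4*n then
    (if aPL h (n - 1 - (h.length - 2*n)/2) || aPR h (n - 1 - (h.length - 2*n)/2) then fun _ => none
     else fun j => if j.val = n - 1 - (h.length - 2*n)/2 then some (decide ((h.length - 2*n) % 2 = 0))
      else if aPL h j.val then some true
      else if aPR h j.val then some false
      else if n - 1 - (h.length - 2*n)/2 < j.val then (if aR2 n h j.val then some false else some true)
      else none)
  else fun _ => none

def algOut (n : ℕ) (h : List Bool) : Finset (Fin n) × Finset (Fin n) :=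
  (Finset.univ.filter (fun i => aPL h i.val = true ∨ hbit h (p2base n i.val + 1) = false),
   Finset.univ.filter (fun i => aPR h i.val = true ∨
      (hbit h (p2base n i.val) = false ∧ hbit h (p2base n i.val + 1) = true)))

end GtLearn

namespace GtLearn

variable {n : ℕ} {T : Finset (Fin n × Fin n)}
  (hd : Disjoint (T.image Prod.fst) (T.image Prod.snd))

section Struct
include hd

lemma hLR {p q : Fin n × Fin n} (hp : p ∈ T) (hq : q ∈ T) (h : p.1.val = q.2.val) : False := by
  have h1 : p.1 ∈ T.image Prod.fst := Finset.mem_image_of_mem _ hp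
  have h2 : p.1 ∈ T.image Prod.snd := by
    have : p.1 = q.2 := Fin.val_injective h
    rw [this]; exact Finset.mem_image_of_mem _ hq
  exact Finset.disjoint_left.mp hd h1 h2

lemma Ln_Rn {m : ℕ} (h1 : Ln T m) (h2 : Rn T m) : False := by
  obtain ⟨p, hp, e1⟩ := h1; obtain ⟨q, hq, e2⟩ := h2
  exact hLR hd hp hq (e1.trans e2.symm)

lemma noloop {p : Fin n × Fin n} (hp : p ∈ T) (h : p.1.val = p.2.val) : False :=
  hLR hd hp hp h

lemma not_PL_of_R {p : Fin n × Fin n} (hp : p ∈ T) : ¬ PLn T p.2.val := by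
  rintro ⟨q, hq, e, -⟩; exact hLR hd hq hp e

lemma not_PR_of_L {p : Fin n × Fin n} (hp : p ∈ T) : ¬ PRn T p.1.val := by
  rintro ⟨q, hq, e, -, -⟩; exact hLR hd hp hq e.symm

lemma not_Q2R_of_L {p : Fin n × Fin n} (hp : p ∈ T) : ¬ Q2Rn T p.1.val := by
  rintro ⟨-, -, q, hq, e, -⟩; exact hLR hd hp hq e.symm

lemma not_En_of_L {p : Fin n × Fin n} (hp : p ∈ T) : ¬ En T p.1.val := by
  rintro ⟨q, hq, e, -⟩; exact hLR hd hp hq e.symm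

lemma PL_PR_excl {m : ℕ} (h1 : PLn T m) (h2 : PRn T m) : False := by
  obtain ⟨p, hp, e1, -⟩ := h1; obtain ⟨q, hq, e2, -, -⟩ := h2
  exact hLR hd hp hq (e1.trans e2.symm)

end Struct

lemma answerQ_iff {q : Fin n → Option Bool} :
    answerQ n T q = true ↔
      ∀ p ∈ T, ∀ a, q p.1 = some a → ∀ b, q p.2 = some b → a = true ∧ b = false := by
  unfold answerQ
  rw [decide_eq_true_eq]
  constructor
  · intro H p hp a ha b hb
    exact H p hp a (by simp [Option.mem_def, ha]) b (by simp [Option.mem_def, hb])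
  · intro H p hp a ha b hb
    exact H p hp a (Option.mem_def.mp ha) b (Option.mem_def.mp hb)

lemma eq_not_decide {P : Prop} [Decidable P] {b : Bool} (h : b = true ↔ ¬ P) :
    b = !decide P := by by_cases hP : P <;> simp_all


lemma sqA_eq_some {m : ℕ} {v : Bool} {j : Fin n} {a : Bool} (h : sqA T m v j = some a) :
    (j.val = m ∧ a = v) ∨
    (j.val < m ∧ ¬ PLn T j.val ∧ PRn T j.val ∧ a = false) ∨
    (j.val < m ∧ ¬ PLn T j.val ∧ ¬ PRn T j.val ∧ a = true) := by
  unfold sqA at h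
  split_ifs at h with h1 h2 h3 h4 <;> simp_all

lemma sqB_eq_some {m : ℕ} {v : Bool} {j : Fin n} {a : Bool} (h : sqB T m v j = some a) :
    (j.val = m ∧ a = v) ∨
    (j.val ≠ m ∧ PLn T j.val ∧ a = true) ∨
    (j.val ≠ m ∧ ¬ PLn T j.val ∧ PRn T j.val ∧ a = false) ∨
    (j.val ≠ m ∧ ¬ PLn T j.val ∧ ¬ PRn T j.val ∧ m < j.val ∧ Q2Rn T j.val ∧ a = false) ∨
    (j.val ≠ m ∧ ¬ PLn T j.val ∧ ¬ PRn T j.val ∧ m < j.val ∧ ¬ Q2Rn T j.val ∧ a = true) := by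
  unfold sqB at h
  split_ifs at h with h1 h2 h3 h4 h5 <;> simp_all

lemma sqA_self {m : ℕ} {v : Bool} {j : Fin n} (h : j.val = m) : sqA T m v j = some v := by
  unfold sqA; simp [h]

lemma sqB_self {m : ℕ} {v : Bool} {j : Fin n} (h : j.val = m) : sqB T m v j = some v := by
  unfold sqB; simp [h]

lemma sqA_lt_some {m : ℕ} {v : Bool} {j : Fin n} (h1 : j.val < m) (h2 : ¬ PLn T j.val) :
    ∃ c, sqA T m v j = some c := by
  unfold sqA
  rw [if_neg (by omega), if_pos h1, if_neg h2]
  by_cases h3 : PRn T j.val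
  · exact ⟨false, by rw [if_pos h3]⟩
  · exact ⟨true, by rw [if_neg h3]⟩

lemma sqB_ne_some {m : ℕ} {v : Bool} {j : Fin n} (h1 : j.val ≠ m)
    (h2 : PLn T j.val ∨ PRn T j.val ∨ m < j.val) :
    ∃ c, sqB T m v j = some c := by
  unfold sqB
  rw [if_neg h1]
  by_cases h3 : PLn T j.val
  · exact ⟨true, by rw [if_pos h3]⟩
  rw [if_neg h3]
  by_cases h4 : PRn T j.val
  · exact ⟨false, by rw [if_pos h4]⟩
  rw [if_neg h4]
  have h5 : m < j.val := by tauto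
  rw [if_pos h5]
  by_cases h6 : Q2Rn T j.val
  · exact ⟨false, by rw [if_pos h6]⟩
  · exact ⟨true, by rw [if_neg h6]⟩


section Answers
include hd

lemma ansA_false {m : ℕ} : answerQ n T (sqA T m false) = !decide (PLn T m) := by
  apply eq_not_decide
  rw [answerQ_iff]
  constructor
  · intro H hPL
    obtain ⟨p, hp, e1, e2⟩ := hPL
    have hb2 : ¬ PLn T p.2.val := not_PL_of_R hd hp
    obtain ⟨c, hc⟩ := sqA_lt_some (v := false) (by omega : p.2.val < m) hb2
    exact absurd (H p hp false (sqA_self e1) c hc).1 (by simp)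
  · intro hnPL p hp a ha b hb
    rcases sqA_eq_some ha with ⟨e1, rfl⟩ | ⟨l1, pl1, pr1, rfl⟩ | ⟨l1, pl1, pr1, rfl⟩
    · -- p.1 is the query variable, value false: we must contradict
      rcases sqA_eq_some hb with ⟨e2, rfl⟩ | ⟨l2, pl2, pr2, rfl⟩ | ⟨l2, pl2, pr2, rfl⟩
      · exact absurd (e1.trans e2.symm) (fun h => noloop hd hp h)
      · exact absurd ⟨p, hp, e1, by omega⟩ hnPL
      · exact absurd ⟨p, hp, e1, by omega⟩ hnPL
    · exact absurd pr1 (not_PR_of_L hd hp)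
    · -- a = true; analyze b
      rcases sqA_eq_some hb with ⟨e2, rfl⟩ | ⟨l2, pl2, pr2, rfl⟩ | ⟨l2, pl2, pr2, rfl⟩
      · exact ⟨rfl, rfl⟩
      · exact ⟨rfl, rfl⟩
      · -- both interior, both would be `true`: impossible
        exfalso
        rcases lt_trichotomy p.1.val p.2.val with hlt | heq | hgt
        · exact pr2 ⟨p, hp, rfl, hlt, pl1⟩
        · exact noloop hd hp heq
        · exact pl1 ⟨p, hp, rfl, hgt⟩

lemma ansA_true {m : ℕ} : answerQ n T (sqA T m true) = !decide (PRn T m ∨ D2n T m) := by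
  apply eq_not_decide
  rw [answerQ_iff]
  constructor
  · intro H hW
    rcases hW with ⟨q, hq, e2, l1, pl1⟩ | ⟨q, hq, e1, l2, pr2⟩
    · -- PRn m: witness pair (q.1, q.2) with q.2.val = m
      have hpr : ¬ PRn T q.1.val := not_PR_of_L hd hq
      obtain ⟨c, hc⟩ := sqA_lt_some (v := true) (by omega : q.1.val < m) pl1
      have hcval : c = true := by
        unfold sqA at hc
        rw [if_neg (by omega), if_pos (by omega), if_neg pl1, if_neg hpr] at hc
        exact (Option.some.inj hc).symm
      subst hcval
      exact absurd (H q hq true hc true (sqA_self e2)).2 (by simp)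
    · -- D2n m
      have hb2 : ¬ PLn T q.2.val := not_PL_of_R hd hq
      obtain ⟨c, hc⟩ := sqA_lt_some (v := true) (by omega : q.2.val < m) hb2
      have hcval : c = true := by
        unfold sqA at hc
        rw [if_neg (by omega), if_pos (by omega), if_neg hb2, if_neg pr2] at hc
        exact (Option.some.inj hc).symm
      subst hcval
      exact absurd (H q hq true (sqA_self e1) true hc).2 (by simp)
  · intro hnW p hp a ha b hb
    rcases sqA_eq_some ha with ⟨e1, rfl⟩ | ⟨l1, pl1, pr1, rfl⟩ | ⟨l1, pl1, pr1, rfl⟩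
    · rcases sqA_eq_some hb with ⟨e2, rfl⟩ | ⟨l2, pl2, pr2, rfl⟩ | ⟨l2, pl2, pr2, rfl⟩
      · exact absurd (e1.trans e2.symm) (fun h => noloop hd hp h)
      · exact ⟨rfl, rfl⟩
      · exact absurd (Or.inr ⟨p, hp, e1, by omega, pr2⟩) hnW
    · exact absurd pr1 (not_PR_of_L hd hp)
    · rcases sqA_eq_some hb with ⟨e2, rfl⟩ | ⟨l2, pl2, pr2, rfl⟩ | ⟨l2, pl2, pr2, rfl⟩
      · exact absurd (Or.inl ⟨p, hp, e2, by omega, pl1⟩) hnW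
      · exact ⟨rfl, rfl⟩
      · exfalso
        rcases lt_trichotomy p.1.val p.2.val with hlt | heq | hgt
        · exact pr2 ⟨p, hp, rfl, hlt, pl1⟩
        · exact noloop hd hp heq
        · exact pl1 ⟨p, hp, rfl, hgt⟩


lemma ansB_false {m : ℕ} (h1 : ¬ PLn T m) :
    answerQ n T (sqB T m false) = !decide (Ln T m) := by
  apply eq_not_decide
  rw [answerQ_iff]
  constructor
  · intro H hL
    obtain ⟨q, hq, e1⟩ := hL
    have hne : q.2.val ≠ m := fun h => noloop hd hq (e1.trans h.symm)
    have hass : PLn T q.2.val ∨ PRn T q.2.val ∨ m < q.2.val := by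
      by_cases hpl : PLn T q.2.val
      · exact Or.inl hpl
      by_cases hpr : PRn T q.2.val
      · exact Or.inr (Or.inl hpr)
      rcases lt_trichotomy q.2.val m with hlt | heq | hgt
      · exact absurd ⟨q, hq, e1, hlt⟩ h1
      · exact absurd heq hne
      · exact Or.inr (Or.inr hgt)
    obtain ⟨c, hc⟩ := sqB_ne_some (v := false) hne hass
    exact absurd (H q hq false (sqB_self e1) c hc).1 (by simp)
  · intro hnW p hp a ha b hb
    rcases sqB_eq_some ha with ⟨e1, rfl⟩ | ⟨ne1, pl1, rfl⟩ | ⟨ne1, pl1, pr1, rfl⟩ |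
      ⟨ne1, pl1, pr1, lt1, q1, rfl⟩ | ⟨ne1, pl1, pr1, lt1, q1, rfl⟩
    · exact absurd ⟨p, hp, e1⟩ hnW
    · rcases sqB_eq_some hb with ⟨e2, rfl⟩ | ⟨ne2, pl2, rfl⟩ | ⟨ne2, pl2, pr2, rfl⟩ |
        ⟨ne2, pl2, pr2, lt2, q2, rfl⟩ | ⟨ne2, pl2, pr2, lt2, q2, rfl⟩
      · exact ⟨rfl, rfl⟩
      · exact absurd pl2 (not_PL_of_R hd hp)
      · exact ⟨rfl, rfl⟩
      · exact ⟨rfl, rfl⟩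
      · exact absurd ⟨pl2, pr2, p, hp, rfl, Or.inl pl1⟩ q2
    · exact absurd pr1 (not_PR_of_L hd hp)
    · exact absurd q1 (not_Q2R_of_L hd hp)
    · rcases sqB_eq_some hb with ⟨e2, rfl⟩ | ⟨ne2, pl2, rfl⟩ | ⟨ne2, pl2, pr2, rfl⟩ |
        ⟨ne2, pl2, pr2, lt2, q2, rfl⟩ | ⟨ne2, pl2, pr2, lt2, q2, rfl⟩
      · exact ⟨rfl, rfl⟩
      · exact absurd pl2 (not_PL_of_R hd hp)
      · exact ⟨rfl, rfl⟩
      · exact ⟨rfl, rfl⟩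
      · exfalso
        rcases lt_trichotomy p.1.val p.2.val with hlt | heq | hgt
        · exact pr2 ⟨p, hp, rfl, hlt, pl1⟩
        · exact noloop hd hp heq
        · exact q2 ⟨pl2, pr2, p, hp, rfl, Or.inr hgt⟩

lemma ansB_true {m : ℕ} (h1 : ¬ PLn T m) (h2 : ¬ PRn T m) :
    answerQ n T (sqB T m true) = !decide (En T m) := by
  apply eq_not_decide
  rw [answerQ_iff]
  constructor
  · intro H hE
    obtain ⟨q, hq, e2, hor⟩ := hE
    have hne : q.1.val ≠ m := fun h => noloop hd hq (h.trans e2.symm)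
    have hass : PLn T q.1.val ∨ PRn T q.1.val ∨ m < q.1.val := by
      rcases hor with h | h
      · exact Or.inl h
      · exact Or.inr (Or.inr h)
    obtain ⟨c, hc⟩ := sqB_ne_some (v := true) hne hass
    exact absurd (H q hq c hc true (sqB_self e2)).2 (by simp)
  · intro hnW p hp a ha b hb
    rcases sqB_eq_some ha with ⟨e1, rfl⟩ | ⟨ne1, pl1, rfl⟩ | ⟨ne1, pl1, pr1, rfl⟩ |
      ⟨ne1, pl1, pr1, lt1, q1, rfl⟩ | ⟨ne1, pl1, pr1, lt1, q1, rfl⟩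
    · rcases sqB_eq_some hb with ⟨e2, rfl⟩ | ⟨ne2, pl2, rfl⟩ | ⟨ne2, pl2, pr2, rfl⟩ |
        ⟨ne2, pl2, pr2, lt2, q2, rfl⟩ | ⟨ne2, pl2, pr2, lt2, q2, rfl⟩
      · exact absurd (e1.trans e2.symm) (fun h => noloop hd hp h)
      · exact absurd pl2 (not_PL_of_R hd hp)
      · exact ⟨rfl, rfl⟩
      · exact ⟨rfl, rfl⟩
      · exact absurd ⟨p, hp, rfl, by omega, e1 ▸ h1⟩ pr2
    · rcases sqB_eq_some hb with ⟨e2, rfl⟩ | ⟨ne2, pl2, rfl⟩ | ⟨ne2, pl2, pr2, rfl⟩ |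
        ⟨ne2, pl2, pr2, lt2, q2, rfl⟩ | ⟨ne2, pl2, pr2, lt2, q2, rfl⟩
      · exact absurd ⟨p, hp, e2, Or.inl pl1⟩ hnW
      · exact absurd pl2 (not_PL_of_R hd hp)
      · exact ⟨rfl, rfl⟩
      · exact ⟨rfl, rfl⟩
      · exact absurd ⟨pl2, pr2, p, hp, rfl, Or.inl pl1⟩ q2
    · exact absurd pr1 (not_PR_of_L hd hp)
    · exact absurd q1 (not_Q2R_of_L hd hp)
    · rcases sqB_eq_some hb with ⟨e2, rfl⟩ | ⟨ne2, pl2, rfl⟩ | ⟨ne2, pl2, pr2, rfl⟩ |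
        ⟨ne2, pl2, pr2, lt2, q2, rfl⟩ | ⟨ne2, pl2, pr2, lt2, q2, rfl⟩
      · exact absurd ⟨p, hp, e2, Or.inr lt1⟩ hnW
      · exact absurd pl2 (not_PL_of_R hd hp)
      · exact ⟨rfl, rfl⟩
      · exact ⟨rfl, rfl⟩
      · exfalso
        rcases lt_trichotomy p.1.val p.2.val with hlt | heq | hgt
        · exact pr2 ⟨p, hp, rfl, hlt, pl1⟩
        · exact noloop hd hp heq
        · exact q2 ⟨pl2, pr2, p, hp, rfl, Or.inr hgt⟩

end Answers

lemma ans_dummy : answerQ n T (fun _ => none) = true := by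
  rw [answerQ_iff]; intro p hp a ha; simp at ha


lemma pAns_odd1 {j : ℕ} (hj : j < n) : pAns T (2*j+1) = !decide (PLn T j) := by
  unfold pAns
  rw [if_pos (by omega : 2*j+1 < 2*n), if_pos (by omega : (2*j+1) % 2 = 1),
    (by omega : (2*j+1)/2 = j)]

lemma pAns_even1 {j : ℕ} (hj : j < n) :
    pAns T (2*j) = !decide (PRn T j ∨ D2n T j) := by
  unfold pAns
  rw [if_pos (by omega : 2*j < 2*n), if_neg (by omega : ¬ (2*j) % 2 = 1),
    (by omega : (2*j)/2 = j)]

lemma pAns_p2a {j : ℕ} (hj : j < n) :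
    pAns T (p2base n j) = if PLn T j ∨ PRn T j then true else !decide (En T j) := by
  unfold pAns p2base
  rw [if_neg (by omega), if_pos (by omega),
    (by omega : n - 1 - ((2*n + 2*(n - 1 - j)) - 2*n)/2 = j),
    if_neg (by omega : ¬ ((2*n + 2*(n - 1 - j)) - 2*n) % 2 = 1)]

lemma pAns_p2b {j : ℕ} (hj : j < n) :
    pAns T (p2base n j + 1) = if PLn T j ∨ PRn T j then true else !decide (Ln T j) := by
  unfold pAns p2base
  rw [if_neg (by omega), if_pos (by omega),
    (by omega : n - 1 - ((2*n + 2*(n - 1 - j) + 1) - 2*n)/2 = j),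
    if_pos (by omega : ((2*n + 2*(n - 1 - j) + 1) - 2*n) % 2 = 1)]

lemma getD_hist (f : ℕ → Bool) {s k : ℕ} (h : s < k) :
    hbit ((List.range k).map f) s = f s := by
  unfold hbit
  simp [List.getD_eq_getElem?_getD, List.getElem?_map, List.getElem?_range, h]

lemma aPL_eval {k j : ℕ} (hj : j < n) (hk : 2*j+1 < k) :
    aPL ((List.range k).map (pAns T)) j = decide (PLn T j) := by
  unfold aPL
  rw [getD_hist _ hk, pAns_odd1 hj, Bool.not_not]

section Evals
include hd

lemma aPR_eval {k j : ℕ} (hj : j < n) (hk : 2*j+1 < k) :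
    aPR ((List.range k).map (pAns T)) j = decide (PRn T j) := by
  unfold aPR
  rw [getD_hist _ (by omega), getD_hist _ hk, pAns_even1 hj, pAns_odd1 hj, Bool.not_not]
  by_cases h1 : PLn T j
  · have h2 : ¬ PRn T j := fun h => PL_PR_excl hd h1 h
    simp [h1, h2]
  · have h5 : ¬ D2n T j := fun ⟨p, hp, e1, e2, _⟩ => h1 ⟨p, hp, e1, e2⟩
    by_cases h4 : PRn T j <;> simp [h1, h4, h5]

lemma aR2_eval {k j : ℕ} (hj : j < n) (hk : p2base n j + 1 < k)
    (h1 : ¬ PLn T j) (h2 : ¬ PRn T j) :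
    aR2 n ((List.range k).map (pAns T)) j = decide (Q2Rn T j) := by
  unfold aR2
  rw [getD_hist _ (by omega), getD_hist _ hk, pAns_p2a hj, pAns_p2b hj,
    if_neg (not_or.mpr ⟨h1, h2⟩), if_neg (not_or.mpr ⟨h1, h2⟩), Bool.not_not]
  by_cases hE : En T j
  · have hnL : ¬ Ln T j := by
      obtain ⟨p, hp, e, _⟩ := hE
      intro hL; exact Ln_Rn hd hL ⟨p, hp, e⟩
    have hQ : Q2Rn T j := ⟨h1, h2, hE⟩
    simp [hE, hnL, hQ]
  · have hQ : ¬ Q2Rn T j := fun h => hE h.2.2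
    simp [hE, hQ]

end Evals


section Sim
include hd

lemma stepEq {k : ℕ} (hk : k ≤ 4*n) :
    answerQ n T (algA n ((List.range k).map (pAns T))) = pAns T k := by
  have hlen : ((List.range k).map (pAns T)).length = k := by simp
  by_cases h2 : k < 2*n
  · have hq : algA n ((List.range k).map (pAns T)) = sqA T (k/2) (decide (k % 2 = 0)) := by
      funext j
      unfold algA sqA
      rw [hlen, if_pos h2]
      by_cases e1 : j.val = k/2
      · simp [e1]
      rw [if_neg e1, if_neg e1]
      by_cases e2 : j.val < k/2
      · rw [if_pos e2, if_pos e2]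
        have hj : j.val < n := j.isLt
        have hidx : 2*j.val+1 < k := by omega
        rw [aPL_eval hj hidx, aPR_eval hd hj hidx]
        by_cases hPL : PLn T j.val
        · simp [hPL]
        · by_cases hPR : PRn T j.val <;> simp [hPL, hPR]
      · rw [if_neg e2, if_neg e2]
    rw [hq]
    by_cases hpar : k % 2 = 0
    · rw [show decide (k % 2 = 0) = true by simp [hpar], ansA_true hd]
      unfold pAns
      rw [if_pos h2, if_neg (by omega)]
    · rw [show decide (k % 2 = 0) = false by simp [hpar], ansA_false hd]
      unfold pAns
      rw [if_pos h2, if_pos (by omega)]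
  · by_cases h4 : k < 4*n
    · have hn0 : 0 < n := by omega
      set i := n - 1 - (k - 2*n)/2 with hi
      have hin : i < n := by omega
      have hidx : 2*i+1 < k := by omega
      have hA : aPL ((List.range k).map (pAns T)) i = decide (PLn T i) := aPL_eval hin hidx
      have hB : aPR ((List.range k).map (pAns T)) i = decide (PRn T i) := aPR_eval hd hin hidx
      by_cases hg : PLn T i ∨ PRn T i
      · have hq : algA n ((List.range k).map (pAns T)) = fun _ => none := by
          unfold algA
          rw [hlen, if_neg h2, if_pos h4, ← hi, hA, hB,
            if_pos (by rcases hg with hg | hg <;> simp [hg])]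
        rw [hq, ans_dummy]
        unfold pAns
        rw [if_neg h2, if_pos h4, ← hi, if_pos hg]
      · obtain ⟨hgl, hgr⟩ := not_or.mp hg
        have hq : algA n ((List.range k).map (pAns T)) =
            sqB T i (decide ((k - 2*n) % 2 = 0)) := by
          funext j
          unfold algA sqB
          rw [hlen, if_neg h2, if_pos h4, ← hi, hA, hB,
            if_neg (by simp [hgl, hgr])]
          by_cases e1 : j.val = i
          · simp [e1]
          rw [if_neg e1, if_neg e1]
          have hj : j.val < n := j.isLt
          have hjidx : 2*j.val+1 < k := by omega
          rw [aPL_eval hj hjidx, aPR_eval hd hj hjidx]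
          by_cases hPL : PLn T j.val
          · simp [hPL]
          rw [if_neg (by simp [hPL]), if_neg hPL]
          by_cases hPR : PRn T j.val
          · simp [hPR]
          rw [if_neg (by simp [hPR]), if_neg hPR]
          by_cases e3 : i < j.val
          · rw [if_pos e3, if_pos e3]
            have hbase : p2base n j.val + 1 < k := by
              unfold p2base; omega
            rw [aR2_eval hd hj hbase hPL hPR]
            by_cases hQ : Q2Rn T j.val <;> simp [hQ]
          · rw [if_neg e3, if_neg e3]
        rw [hq]
        by_cases hpar : (k - 2*n) % 2 = 0
        · rw [show decide ((k - 2*n) % 2 = 0) = true by simp [hpar], ansB_true hd hgl hgr]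
          unfold pAns
          rw [if_neg h2, if_pos h4, ← hi, if_neg hg, if_neg (by omega)]
        · rw [show decide ((k - 2*n) % 2 = 0) = false by simp [hpar], ansB_false hd hgl]
          unfold pAns
          rw [if_neg h2, if_pos h4, ← hi, if_neg hg, if_pos (by omega)]
    · have hq : algA n ((List.range k).map (pAns T)) = fun _ => none := by
        unfold algA
        rw [hlen, if_neg h2, if_neg h4]
      rw [hq, ans_dummy]
      unfold pAns
      rw [if_neg h2, if_neg h4]

lemma simEq : ∀ k, k ≤ 4*n + 1 → runHist n (algA n) T k = (List.range k).map (pAns T) := by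
  intro k
  induction k with
  | zero => intro _; simp [runHist]
  | succ k ih =>
    intro hk
    have hk' : k ≤ 4*n := by omega
    rw [runHist, ih (by omega), stepEq hd hk', List.range_succ, List.map_append]
    rfl

end Sim


section Final
include hd

lemma mem_fst_iff {i : Fin n} : i ∈ T.image Prod.fst ↔ Ln T i.val := by
  rw [Finset.mem_image]
  constructor
  · rintro ⟨p, hp, e⟩; exact ⟨p, hp, congrArg Fin.val e⟩
  · rintro ⟨p, hp, e⟩; exact ⟨p, hp, Fin.val_injective e⟩

lemma mem_snd_iff {i : Fin n} : i ∈ T.image Prod.snd ↔ Rn T i.val := by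
  rw [Finset.mem_image]
  constructor
  · rintro ⟨p, hp, e⟩; exact ⟨p, hp, congrArg Fin.val e⟩
  · rintro ⟨p, hp, e⟩; exact ⟨p, hp, Fin.val_injective e⟩

lemma out_correct :
    algOut n ((List.range (4*n+1)).map (pAns T)) = (T.image Prod.fst, T.image Prod.snd) := by
  have hL : (Finset.univ.filter (fun i : Fin n =>
      aPL ((List.range (4*n+1)).map (pAns T)) i.val = true ∨
      hbit ((List.range (4*n+1)).map (pAns T)) (p2base n i.val + 1) = false)) =
      T.image Prod.fst := by
    ext i
    have hiv : i.val < n := i.isLt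
    rw [Finset.mem_filter]
    rw [aPL_eval hiv (by omega), getD_hist _ (by unfold p2base; omega), pAns_p2b hiv]
    simp only [Finset.mem_univ, true_and]
    rw [mem_fst_iff hd]
    by_cases h1 : PLn T i.val
    · have hLn : Ln T i.val := by obtain ⟨p, hp, e, _⟩ := h1; exact ⟨p, hp, e⟩
      simp [h1, hLn]
    · by_cases h2 : PRn T i.val
      · have hnLn : ¬ Ln T i.val := by
          intro hLn
          obtain ⟨q, hq, e2, _, _⟩ := h2
          exact Ln_Rn hd hLn ⟨q, hq, e2⟩
        simp [h1, h2, hnLn]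
      · by_cases hLn : Ln T i.val <;> simp [h1, h2, hLn]
  have hR : (Finset.univ.filter (fun i : Fin n =>
      aPR ((List.range (4*n+1)).map (pAns T)) i.val = true ∨
      (hbit ((List.range (4*n+1)).map (pAns T)) (p2base n i.val) = false ∧
       hbit ((List.range (4*n+1)).map (pAns T)) (p2base n i.val + 1) = true))) =
      T.image Prod.snd := by
    ext i
    have hiv : i.val < n := i.isLt
    rw [Finset.mem_filter]
    rw [aPR_eval hd hiv (by omega), getD_hist _ (by unfold p2base; omega),
      getD_hist _ (by unfold p2base; omega), pAns_p2a hiv, pAns_p2b hiv]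
    simp only [Finset.mem_univ, true_and]
    rw [mem_snd_iff hd]
    by_cases h1 : PLn T i.val
    · have h2 : ¬ PRn T i.val := fun h => PL_PR_excl hd h1 h
      have hnRn : ¬ Rn T i.val := by
        intro hRn
        obtain ⟨p, hp, e, _⟩ := h1
        exact Ln_Rn hd ⟨p, hp, e⟩ hRn
      simp [h1, h2, hnRn]
    · by_cases h2 : PRn T i.val
      · have hRn : Rn T i.val := by obtain ⟨q, hq, e2, _, _⟩ := h2; exact ⟨q, hq, e2⟩
        simp [h1, h2, hRn]
      · have key : (En T i.val ∧ ¬ Ln T i.val) ↔ Rn T i.val := by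
          constructor
          · rintro ⟨⟨q, hq, e2, -⟩, -⟩
            exact ⟨q, hq, e2⟩
          · rintro ⟨p, hp, e⟩
            have hnLn : ¬ Ln T i.val := fun hL => Ln_Rn hd hL ⟨p, hp, e⟩
            refine ⟨?_, hnLn⟩
            rcases lt_trichotomy p.1.val i.val with hlt | heq | hgt
            · by_cases hpl : PLn T p.1.val
              · exact ⟨p, hp, e, Or.inl hpl⟩
              · exact absurd ⟨p, hp, e, hlt, hpl⟩ h2
            · exact absurd (heq.trans e.symm) (fun h => hLR hd hp hp h)
            · exact ⟨p, hp, e, Or.inr hgt⟩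
        by_cases hE : En T i.val <;> by_cases hLn : Ln T i.val <;>
          simp only [h1, h2, hE, hLn, key.symm] <;> simp [h1, h2, hE, hLn]
  unfold algOut
  rw [hL, hR]

end Final

end GtLearn

/-- Networks over `{>}` on the Boolean domain are learnable with
`O(n)` partial queries: there is a deterministic algorithm asking at most
`4n + 1` partial queries that, for every satisfiable target network `T`
(i.e. `Left(T)` and `Right(T)` disjoint), correctly identifies the sets
`Left(T)` and `Right(T)`, which characterize `T` up to equivalence. -/
theorem gt_networks_learnable_linear_queries (n : ℕ) :
    ∃ (A : List Bool → (Fin n → Option Bool))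
      (Out : List Bool → Finset (Fin n) × Finset (Fin n)),
      ∀ T : Finset (Fin n × Fin n),
        Disjoint (T.image Prod.fst) (T.image Prod.snd) →
        Out (runHist n A T (4 * n + 1)) = (T.image Prod.fst, T.image Prod.snd) := by
  refine ⟨GtLearn.algA n, GtLearn.algOut n, ?_⟩
  intro T hd
  rw [GtLearn.simEq hd (4*n+1) le_rfl]
  exact GtLearn.out_correct hd
end

section
/- Let Δ be a set of conjunctions of elementary constraints over a fixed scope. If a sequence of 'join' updates replaces Δ by {δ ∧ δ' : δ ∈ Δ, δ' ∈ K} whenever an example violates exactly the conjunctions in K ⊊ Δ (K ≠ ∅), and c* is a conjunction such that at every step some subset of c* lies in K, then after each update the union of the subsets of c* present in Δ still covers all elementary constraints of c*; moreover the maximum size of a subset of c* present in Δ strictly increases at each such update, so after at most |c*| updates c* itself belongs to Δ. -/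
/-- A valid join update: some example (abstracted as a violation predicate
`V` on elementary constraints) violates exactly the conjunctions in
`K = {s ∈ Δ | ∃ x ∈ s, V x}`, with `∅ ≠ K ⊊ Δ` and `K` containing at least one
subset of the target conjunction `cs`; then `Δ` is replaced by all pairwise
unions of a member of `Δ` with a member of `K`. -/
def validStep {α : Type} [DecidableEq α] (cs : Finset α)
    (Δ Δ' : Finset (Finset α)) : Prop :=
  ∃ V : α → Bool,
    (Δ.filter (fun s => ∃ x ∈ s, V x = true)).Nonempty ∧
    (Δ.filter (fun s => ∃ x ∈ s, V x = true)) ≠ Δ ∧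
    (∃ s ∈ Δ.filter (fun s => ∃ x ∈ s, V x = true), s ⊆ cs) ∧
    Δ' = (Δ ×ˢ Δ.filter (fun s => ∃ x ∈ s, V x = true)).image (fun p => p.1 ∪ p.2)

private lemma inv_step {α : Type} [DecidableEq α] {cs : Finset α}
    {Δ Δ' : Finset (Finset α)}
    (hinv : (Δ.filter (fun s => s ⊆ cs)).sup id = cs)
    (hstep : validStep cs Δ Δ') :
    (Δ'.filter (fun s => s ⊆ cs)).sup id = cs := by
  obtain ⟨V, hKne, hKneq, ⟨t, htK, htcs⟩, hΔ'⟩ := hstep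
  apply le_antisymm
  · apply Finset.sup_le
    intro s hs
    exact (Finset.mem_filter.mp hs).2
  · intro x hx
    rw [← hinv, Finset.mem_sup] at hx
    obtain ⟨s, hs, hxs⟩ := hx
    rw [Finset.mem_filter] at hs
    have hmem : s ∪ t ∈ Δ' := by
      rw [hΔ']
      exact Finset.mem_image.mpr ⟨(s, t), Finset.mem_product.mpr ⟨hs.1, htK⟩, rfl⟩
    have hmemf : s ∪ t ∈ Δ'.filter (fun s => s ⊆ cs) :=
      Finset.mem_filter.mpr ⟨hmem, Finset.union_subset hs.2 htcs⟩
    exact (Finset.le_sup (f := id) hmemf) (Finset.mem_union_left _ hxs)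

private lemma card_step {α : Type} [DecidableEq α] {cs : Finset α}
    (hcs : cs.Nonempty) {Δ Δ' : Finset (Finset α)}
    (hinv : (Δ.filter (fun s => s ⊆ cs)).sup id = cs)
    (hstep : validStep cs Δ Δ')
    (hlt : (Δ.filter (fun s => s ⊆ cs)).sup (fun s => s.card) < cs.card) :
    (Δ.filter (fun s => s ⊆ cs)).sup (fun s => s.card) <
      (Δ'.filter (fun s => s ⊆ cs)).sup (fun s => s.card) := by
  obtain ⟨V, hKne, hKneq, ⟨t, htK, htcs⟩, hΔ'⟩ := hstep
  have htK' := Finset.mem_filter.mp htK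
  -- the filter is nonempty
  have hfne : (Δ.filter (fun s => s ⊆ cs)).Nonempty := by
    obtain ⟨x, hx⟩ := hcs
    have hx' : x ∈ (Δ.filter (fun s => s ⊆ cs)).sup id := by rw [hinv]; exact hx
    rw [Finset.mem_sup] at hx'
    obtain ⟨s, hs, _⟩ := hx'
    exact ⟨s, hs⟩
  obtain ⟨s, hsmem, hseq⟩ := Finset.exists_mem_eq_sup _ hfne (fun s => s.card)
  have hs' := Finset.mem_filter.mp hsmem
  -- helper to conclude: a set u ∈ Δ', u ⊆ cs, with s ⊂ u
  have key : ∀ u : Finset α, u ∈ Δ' → u ⊆ cs → s ⊂ u →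
      (Δ.filter (fun s => s ⊆ cs)).sup (fun s => s.card) <
        (Δ'.filter (fun s => s ⊆ cs)).sup (fun s => s.card) := by
    intro u hu hucs hsu
    have : u ∈ Δ'.filter (fun s => s ⊆ cs) := Finset.mem_filter.mpr ⟨hu, hucs⟩
    calc (Δ.filter (fun s => s ⊆ cs)).sup (fun s => s.card) = s.card := hseq
      _ < u.card := Finset.card_lt_card hsu
      _ ≤ _ := Finset.le_sup (f := fun s => s.card) this
  by_cases hsK : ∃ x ∈ s, V x = true
  · -- s itself is violated, so s ∈ K; join some s' covering a missing element with s
    have hsKmem : s ∈ Δ.filter (fun s => ∃ x ∈ s, V x = true) :=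
      Finset.mem_filter.mpr ⟨hs'.1, hsK⟩
    have hscard : s.card < cs.card := by rw [← hseq]; exact hlt
    obtain ⟨x, hxcs, hxns⟩ := Finset.exists_of_ssubset
      (Finset.lt_iff_ssubset.mp (lt_of_le_of_ne (Finset.le_iff_subset.mpr hs'.2)
        (fun h => absurd (h ▸ hscard) (lt_irrefl _))))
    have hx' : x ∈ (Δ.filter (fun s => s ⊆ cs)).sup id := by rw [hinv]; exact hxcs
    rw [Finset.mem_sup] at hx'
    obtain ⟨s', hs'mem, hxs'⟩ := hx'
    have hs'' := Finset.mem_filter.mp hs'mem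
    have hu : s' ∪ s ∈ Δ' := by
      rw [hΔ']
      exact Finset.mem_image.mpr ⟨(s', s), Finset.mem_product.mpr ⟨hs''.1, hsKmem⟩, rfl⟩
    refine key _ hu (Finset.union_subset hs''.2 hs'.2) ?_
    exact Finset.ssubset_iff_of_subset Finset.subset_union_right |>.mpr
      ⟨x, Finset.mem_union_left _ hxs', hxns⟩
  · -- s is not violated; take the violated element x of t, x ∉ s, join s with t
    obtain ⟨x, hxt, hVx⟩ := htK'.2
    have hxns : x ∉ s := fun hxs => hsK ⟨x, hxs, hVx⟩
    have hu : s ∪ t ∈ Δ' := by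
      rw [hΔ']
      exact Finset.mem_image.mpr ⟨(s, t), Finset.mem_product.mpr ⟨hs'.1, htK⟩, rfl⟩
    refine key _ hu (Finset.union_subset hs'.2 htcs) ?_
    exact Finset.ssubset_iff_of_subset Finset.subset_union_left |>.mpr
      ⟨x, Finset.mem_union_right _ hxt, hxns⟩

private lemma filter_nonempty {α : Type} [DecidableEq α] {cs : Finset α}
    (hcs : cs.Nonempty) {Δ : Finset (Finset α)}
    (hinv : (Δ.filter (fun s => s ⊆ cs)).sup id = cs) :
    (Δ.filter (fun s => s ⊆ cs)).Nonempty := by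
  obtain ⟨x, hx⟩ := hcs
  have hx' : x ∈ (Δ.filter (fun s => s ⊆ cs)).sup id := by rw [hinv]; exact hx
  rw [Finset.mem_sup] at hx'
  obtain ⟨s, hs, _⟩ := hx'
  exact ⟨s, hs⟩

private lemma mem_of_sup_card_eq {α : Type} [DecidableEq α] {cs : Finset α}
    (hcs : cs.Nonempty) {Δ : Finset (Finset α)}
    (hinv : (Δ.filter (fun s => s ⊆ cs)).sup id = cs)
    (hsup : (Δ.filter (fun s => s ⊆ cs)).sup (fun s => s.card) = cs.card) :
    cs ∈ Δ := by
  obtain ⟨s, hsmem, hseq⟩ :=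
    Finset.exists_mem_eq_sup _ (filter_nonempty hcs hinv) (fun s : Finset α => s.card)
  have hs' := Finset.mem_filter.mp hsmem
  have : s = cs := Finset.eq_of_subset_of_card_le hs'.2 (by rw [← hseq, hsup])
  exact this ▸ hs'.1

private lemma cs_mem_step {α : Type} [DecidableEq α] {cs : Finset α}
    {Δ Δ' : Finset (Finset α)} (hmem : cs ∈ Δ) (hstep : validStep cs Δ Δ') :
    cs ∈ Δ' := by
  obtain ⟨V, hKne, hKneq, ⟨t, htK, htcs⟩, hΔ'⟩ := hstep
  have : cs ∪ t = cs := Finset.union_eq_left.mpr htcs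
  rw [hΔ']
  exact Finset.mem_image.mpr ⟨(cs, t), Finset.mem_product.mpr ⟨hmem, htK⟩, this⟩

/-- Let `cs` (the target conjunction `c*`) be a nonempty set of
elementary constraints and `Δ` a set of nonempty conjunctions satisfying the
invariant that the subsets of `cs` present in `Δ` cover `cs`.  Then (1) any
valid join update preserves the invariant, (2) the maximum size of a subset of
`cs` present in `Δ` strictly increases at each update while it is `< |cs|`, and
(3) along any sequence of valid updates, `cs` itself belongs to `Δ` after at
most `|cs|` updates. -/
theorem join_updates_reach_target
    {α : Type} [DecidableEq α] (cs : Finset α) (hcs : cs.Nonempty)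
    (Δ Δ' : Finset (Finset α))
    (hne : ∀ s ∈ Δ, s.Nonempty)
    (hinv : (Δ.filter (fun s => s ⊆ cs)).sup id = cs)
    (hstep : validStep cs Δ Δ') :
    ((Δ'.filter (fun s => s ⊆ cs)).sup id = cs) ∧
    ((Δ.filter (fun s => s ⊆ cs)).sup (fun s => s.card) < cs.card →
      (Δ.filter (fun s => s ⊆ cs)).sup (fun s => s.card) <
        (Δ'.filter (fun s => s ⊆ cs)).sup (fun s => s.card)) ∧
    (∀ Δseq : ℕ → Finset (Finset α), Δseq 0 = Δ →
      (∀ i : ℕ, validStep cs (Δseq i) (Δseq (i + 1))) →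
      ∃ k ≤ cs.card, cs ∈ Δseq k) := by
  refine ⟨inv_step hinv hstep, card_step hcs hinv hstep, ?_⟩
  intro Δseq h0 hsteps
  have hinvs : ∀ i, ((Δseq i).filter (fun s => s ⊆ cs)).sup id = cs := by
    intro i
    induction i with
    | zero => rw [h0]; exact hinv
    | succ n ih => exact inv_step ih (hsteps n)
  set f : ℕ → ℕ := fun i => ((Δseq i).filter (fun s => s ⊆ cs)).sup (fun s => s.card)
    with hf
  have hle : ∀ i, f i ≤ cs.card := by
    intro i
    exact Finset.sup_le fun s hs => Finset.card_le_card (Finset.mem_filter.mp hs).2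
  have hgrow : ∀ i, min i cs.card ≤ f i := by
    intro i
    induction i with
    | zero => simp
    | succ n ih =>
      by_cases h : f n < cs.card
      · have h2 : f n < f (n + 1) := card_step hcs (hinvs n) (hsteps n) h
        omega
      · have hfn : f n = cs.card := le_antisymm (hle n) (by omega)
        have hmem : cs ∈ Δseq n := mem_of_sup_card_eq hcs (hinvs n) hfn
        have hmem' : cs ∈ Δseq (n + 1) := cs_mem_step hmem (hsteps n)
        have : cs.card ≤ f (n + 1) :=
          Finset.le_sup (f := fun s : Finset α => s.card)
            (Finset.mem_filter.mpr ⟨hmem', subset_rfl⟩)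
        omega
  have hfinal : f cs.card = cs.card := by
    have := hgrow cs.card
    have := hle cs.card
    omega
  exact ⟨cs.card, le_rfl, mem_of_sup_card_eq hcs (hinvs cs.card) hfinal⟩
end

section
/- In the join-based candidate elimination, once a conjunction is removed from Δ it can never reappear: if rem ∉ Δ after an update, then no subsequent update of the forms 'remove all conjunctions violating a positive example' or 'join all conjunctions with the violated ones' can produce rem again. -/
/-- One update of the candidate set `Δ` given an example (abstracted as a
violation predicate `V` on elementary constraints; a conjunction `s` is
violated iff some element of `s` is violated):
* (positive) remove from `Δ` all violated conjunctions, or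
* (negative, with a nonempty violated set `κ`) replace `Δ` by all pairwise
  unions of a member of `Δ` with a member of `κ`. -/
def stepRel {α : Type} [DecidableEq α] (Δ Δ' : Finset (Finset α)) : Prop :=
  ∃ V : α → Bool,
    (Δ' = Δ.filter (fun s => ¬ ∃ x ∈ s, V x = true)) ∨
    ((Δ.filter (fun s => ∃ x ∈ s, V x = true)).Nonempty ∧
      Δ' = (Δ ×ˢ Δ.filter (fun s => ∃ x ∈ s, V x = true)).image (fun p => p.1 ∪ p.2))

/-- `rem` is not the union of any nonempty family of members of `Δ`. -/
def NoCover {α : Type} [DecidableEq α] (Δ : Finset (Finset α)) (rem : Finset α) : Prop :=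
  ¬ ∃ S : Finset (Finset α), S.Nonempty ∧ (∀ s ∈ S, s ∈ Δ) ∧ S.sup id = rem

lemma noCover_establish {α : Type} [DecidableEq α]
    {Δ Δ' : Finset (Finset α)} {rem : Finset α}
    (hstep : stepRel Δ Δ') (h1 : rem ∈ Δ) (h2 : rem ∉ Δ') : NoCover Δ' rem := by
  obtain ⟨V, hpos | ⟨hκ, hneg⟩⟩ := hstep
  · -- positive case: rem was filtered out, so some x ∈ rem is violated
    have hviol : ∃ x ∈ rem, V x = true := by
      by_contra hx
      exact h2 (hpos ▸ Finset.mem_filter.mpr ⟨h1, hx⟩)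
    obtain ⟨x, hxrem, hVx⟩ := hviol
    rintro ⟨S, hne, hsub, hsup⟩
    have : x ∈ S.sup id := hsup ▸ hxrem
    obtain ⟨s, hsS, hxs⟩ := Finset.mem_sup.mp this
    have := hsub s hsS
    rw [hpos, Finset.mem_filter] at this
    exact this.2 ⟨x, hxs, hVx⟩
  · -- negative case
    rintro ⟨S, ⟨s0, hs0⟩, hsub, hsup⟩
    have hs0' := hsub s0 hs0
    rw [hneg, Finset.mem_image] at hs0'
    obtain ⟨p, hp, hps⟩ := hs0'
    rw [Finset.mem_product] at hp
    -- p.2 is violated and p.2 ⊆ s0 ⊆ rem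
    have hp2rem : p.2 ⊆ rem := by
      intro x hx
      have hxs0 : x ∈ s0 := hps ▸ Finset.mem_union_right _ hx
      rw [← hsup]
      exact Finset.mem_sup.mpr ⟨s0, hs0, hxs0⟩
    apply h2
    rw [hneg, Finset.mem_image]
    exact ⟨(rem, p.2), Finset.mem_product.mpr ⟨h1, hp.2⟩, Finset.union_eq_left.mpr hp2rem⟩

lemma noCover_preserve {α : Type} [DecidableEq α]
    {Δ Δ' : Finset (Finset α)} {rem : Finset α}
    (hstep : stepRel Δ Δ') (hQ : NoCover Δ rem) : NoCover Δ' rem := by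
  obtain ⟨V, hpos | ⟨hκ, hneg⟩⟩ := hstep
  · -- positive: Δ' ⊆ Δ
    rintro ⟨S, hne, hsub, hsup⟩
    exact hQ ⟨S, hne, fun s hs => (Finset.mem_filter.mp (hpos ▸ hsub s hs)).1, hsup⟩
  · rintro ⟨S, ⟨s0, hs0⟩, hsub, hsup⟩
    set κ := Δ.filter (fun s => ∃ x ∈ s, V x = true) with hκdef
    set T := (Δ ×ˢ κ).filter (fun p => p.1 ∪ p.2 ∈ S) with hT
    set S' := T.image Prod.fst ∪ T.image Prod.snd with hS'
    apply hQ
    refine ⟨S', ?_, ?_, ?_⟩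
    · -- nonempty
      have hs0' := hsub s0 hs0
      rw [hneg, Finset.mem_image] at hs0'
      obtain ⟨p, hp, hps⟩ := hs0'
      exact ⟨p.1, Finset.mem_union_left _ (Finset.mem_image.mpr
        ⟨p, Finset.mem_filter.mpr ⟨hp, hps ▸ hs0⟩, rfl⟩)⟩
    · -- subset of Δ
      intro s hs
      rcases Finset.mem_union.mp hs with hs | hs <;>
        obtain ⟨p, hp, rfl⟩ := Finset.mem_image.mp hs <;>
        have hp' := Finset.mem_product.mp (Finset.mem_filter.mp hp).1
      · exact hp'.1
      · exact (Finset.mem_filter.mp hp'.2).1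
    · -- sup = rem
      apply Finset.Subset.antisymm
      · intro x hx
        obtain ⟨s, hsS', hxs⟩ := Finset.mem_sup.mp hx
        rcases Finset.mem_union.mp hsS' with hs | hs <;>
          obtain ⟨p, hp, rfl⟩ := Finset.mem_image.mp hs <;>
          have hpS := (Finset.mem_filter.mp hp).2 <;>
          rw [← hsup]
        · exact Finset.mem_sup.mpr ⟨p.1 ∪ p.2, hpS, Finset.mem_union_left _ hxs⟩
        · exact Finset.mem_sup.mpr ⟨p.1 ∪ p.2, hpS, Finset.mem_union_right _ hxs⟩
      · intro x hx
        rw [← hsup] at hx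
        obtain ⟨s, hsS, hxs⟩ := Finset.mem_sup.mp hx
        have hs' := hsub s hsS
        rw [hneg, Finset.mem_image] at hs'
        obtain ⟨p, hp, rfl⟩ := hs'
        have hpT : p ∈ T := Finset.mem_filter.mpr ⟨hp, hsS⟩
        apply Finset.mem_sup.mpr
        rcases Finset.mem_union.mp hxs with hx1 | hx2
        · exact ⟨p.1, Finset.mem_union_left _ (Finset.mem_image.mpr ⟨p, hpT, rfl⟩), hx1⟩
        · exact ⟨p.2, Finset.mem_union_right _ (Finset.mem_image.mpr ⟨p, hpT, rfl⟩), hx2⟩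

/-- In the join-based candidate elimination, once a conjunction
`rem` is removed from `Δ` it never reappears under any subsequent sequence of
positive-removal or join updates. -/
theorem removed_conjunction_never_reappears
    {α : Type} [DecidableEq α]
    (Δseq : ℕ → Finset (Finset α))
    (hstep : ∀ i : ℕ, stepRel (Δseq i) (Δseq (i + 1)))
    (rem : Finset α) (t : ℕ)
    (h1 : rem ∈ Δseq t) (h2 : rem ∉ Δseq (t + 1)) :
    ∀ u : ℕ, t < u → rem ∉ Δseq u := by
  have key : ∀ u : ℕ, t < u → NoCover (Δseq u) rem := by
    intro u hu
    induction u with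
    | zero => omega
    | succ n ih =>
      rcases Nat.lt_or_ge t n with h | h
      · exact noCover_preserve (hstep n) (ih h)
      · have ht : n = t := by omega
        rw [ht]
        exact noCover_establish (hstep t) h1 h2
  intro u hu hmem
  exact key u hu ⟨{rem}, Finset.singleton_nonempty rem,
    fun s hs => (Finset.mem_singleton.mp hs) ▸ hmem, Finset.sup_singleton⟩
end
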